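/- Let F₁, F₂, F₃ be functors from the category of abelian groups to itself, each sending zero morphisms to zero morphisms, and let η : F₁ ⟶ F₂ and θ : F₂ ⟶ F₃ be natural transformations such that for every abelian group X the sequence 0 → F₁(X) → F₂(X) → F₃(X) → 0 is exact (η_X injective, θ_X surjective, ker θ_X = im η_X). For abelian groups A and B and i = 1,2,3, define the polarisation δF_i(A,B) as the kernel of the map F_i(A ⊕ B) → F_i(A) × F_i(B) induced by F_i applied to the two canonical projections. Then η and θ restrict to maps between the polarisations, and the resulting sequence 0 → δF₁(A,B) → δF₂(A,B) → δF₃(A,B) → 0 is exact. -/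

import Mathlib

open CategoryTheory

universe u

theorem polarisation_of_exact_sequence_is_exact
    (F₁ F₂ F₃ : AddCommGrpCat.{u} ⥤ AddCommGrpCat.{u})
    (hz₁ : ∀ X Y : AddCommGrpCat.{u}, F₁.map (0 : X ⟶ Y) = 0)
    (hz₂ : ∀ X Y : AddCommGrpCat.{u}, F₂.map (0 : X ⟶ Y) = 0)
    (hz₃ : ∀ X Y : AddCommGrpCat.{u}, F₃.map (0 : X ⟶ Y) = 0)
    (η : F₁ ⟶ F₂) (θ : F₂ ⟶ F₃)
    (hinj : ∀ X : AddCommGrpCat.{u}, Function.Injective (η.app X))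
    (hsurj : ∀ X : AddCommGrpCat.{u}, Function.Surjective (θ.app X))
    (hker : ∀ (X : AddCommGrpCat.{u}) (v : F₂.obj X),
      θ.app X v = 0 ↔ ∃ u : F₁.obj X, η.app X u = v) :
    ∀ A B : AddCommGrpCat.{u},
    let AB : AddCommGrpCat.{u} := AddCommGrpCat.of (↥A × ↥B)
    let p₁ : AB ⟶ A := AddCommGrpCat.ofHom (AddMonoidHom.fst ↥A ↥B)
    let p₂ : AB ⟶ B := AddCommGrpCat.ofHom (AddMonoidHom.snd ↥A ↥B)
    -- the polarisations δFᵢ(A,B) = ker (Fᵢ(A⊕B) → Fᵢ(A) × Fᵢ(B))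
    let δ₁ : Set (F₁.obj AB) := {v | F₁.map p₁ v = 0 ∧ F₁.map p₂ v = 0}
    let δ₂ : Set (F₂.obj AB) := {v | F₂.map p₁ v = 0 ∧ F₂.map p₂ v = 0}
    let δ₃ : Set (F₃.obj AB) := {v | F₃.map p₁ v = 0 ∧ F₃.map p₂ v = 0}
    -- η and θ restrict to the polarisations
    (∀ v ∈ δ₁, η.app AB v ∈ δ₂) ∧
    (∀ v ∈ δ₂, θ.app AB v ∈ δ₃) ∧
    -- exactness of 0 → δF₁(A,B) → δF₂(A,B) → δF₃(A,B) → 0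
    (∀ v w : F₁.obj AB, v ∈ δ₁ → w ∈ δ₁ → η.app AB v = η.app AB w → v = w) ∧
    (∀ v ∈ δ₂, (θ.app AB v = 0 ↔ ∃ u ∈ δ₁, η.app AB u = v)) ∧
    (∀ w ∈ δ₃, ∃ v ∈ δ₂, θ.app AB v = w) := by
  intro A B AB p₁ p₂ δ₁ δ₂ δ₃
  -- elementwise naturality
  have natη : ∀ {X Y : AddCommGrpCat.{u}} (f : X ⟶ Y) (x : F₁.obj X),
      F₂.map f (η.app X x) = η.app Y (F₁.map f x) := by
    intro X Y f x
    have := ConcreteCategory.congr_hom (η.naturality f) x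
    rw [CategoryTheory.comp_apply, CategoryTheory.comp_apply] at this
    exact this.symm
  have natθ : ∀ {X Y : AddCommGrpCat.{u}} (f : X ⟶ Y) (x : F₂.obj X),
      F₃.map f (θ.app X x) = θ.app Y (F₂.map f x) := by
    intro X Y f x
    have := ConcreteCategory.congr_hom (θ.naturality f) x
    rw [CategoryTheory.comp_apply, CategoryTheory.comp_apply] at this
    exact this.symm
  -- inclusions and idempotents
  let i₁ : A ⟶ AB := AddCommGrpCat.ofHom (AddMonoidHom.inl ↥A ↥B)
  let i₂ : B ⟶ AB := AddCommGrpCat.ofHom (AddMonoidHom.inr ↥A ↥B)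
  have hp₁i₁ : i₁ ≫ p₁ = 𝟙 A := by ext x; rfl
  have hp₂i₂ : i₂ ≫ p₂ = 𝟙 B := by ext x; rfl
  have hp₂i₁ : i₁ ≫ p₂ = 0 := by ext x; rfl
  have hp₁i₂ : i₂ ≫ p₁ = 0 := by ext x; rfl
  refine ⟨?_, ?_, ?_, ?_, ?_⟩
  · rintro v ⟨h1, h2⟩
    constructor
    · rw [natη, h1, map_zero]
    · rw [natη, h2, map_zero]
  · rintro v ⟨h1, h2⟩
    constructor
    · rw [natθ, h1, map_zero]
    · rw [natθ, h2, map_zero]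
  · intro v w _ _ h
    exact hinj AB h
  · rintro v ⟨h1, h2⟩
    constructor
    · intro hv
      obtain ⟨u, hu⟩ := (hker AB v).mp hv
      refine ⟨u, ⟨?_, ?_⟩, hu⟩
      · apply hinj A
        rw [← natη, hu, h1, map_zero]
      · apply hinj B
        rw [← natη, hu, h2, map_zero]
    · rintro ⟨u, _, hu⟩
      exact (hker AB v).mpr ⟨u, hu⟩
  · rintro w ⟨h1, h2⟩
    obtain ⟨v, hv⟩ := hsurj AB w
    refine ⟨v - F₂.map (p₁ ≫ i₁) v - F₂.map (p₂ ≫ i₂) v, ⟨?_, ?_⟩, ?_⟩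
    · have e1 : F₂.map p₁ (F₂.map (p₁ ≫ i₁) v) = F₂.map p₁ v := by
        rw [← CategoryTheory.comp_apply, ← F₂.map_comp, Category.assoc, hp₁i₁,
          Category.comp_id]
      have e2 : F₂.map p₁ (F₂.map (p₂ ≫ i₂) v) = 0 := by
        rw [← CategoryTheory.comp_apply, ← F₂.map_comp, Category.assoc, hp₁i₂,
          Limits.comp_zero, hz₂]
        rfl
      simp only [map_sub, e1, e2]
      abel
    · have e1 : F₂.map p₂ (F₂.map (p₂ ≫ i₂) v) = F₂.map p₂ v := by
        rw [← CategoryTheory.comp_apply, ← F₂.map_comp, Category.assoc, hp₂i₂,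
          Category.comp_id]
      have e2 : F₂.map p₂ (F₂.map (p₁ ≫ i₁) v) = 0 := by
        rw [← CategoryTheory.comp_apply, ← F₂.map_comp, Category.assoc, hp₂i₁,
          Limits.comp_zero, hz₂]
        rfl
      simp only [map_sub, e1, e2]
      abel
    · have t1 : θ.app AB (F₂.map (p₁ ≫ i₁) v) = 0 := by
        rw [← natθ, hv, F₃.map_comp, CategoryTheory.comp_apply, h1]
        exact (F₃.map i₁).hom.map_zero
      have t2 : θ.app AB (F₂.map (p₂ ≫ i₂) v) = 0 := by
        rw [← natθ, hv, F₃.map_comp, CategoryTheory.comp_apply, h2]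
        exact (F₃.map i₂).hom.map_zero
      simp only [map_sub, t1, t2, hv]
      abel
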